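/- Let p be a prime, G a finite abelian p-group, H a subgroup of G of index p, and x ∈ G \ H. Set e_H = (1/|H|) Σ_{h ∈ H} h ∈ ℚ[G] and e_x = (1/p)(1 + x + ⋯ + x^{p−1}) ∈ ℚ[G]. Then e_H · e_x and e_H · (1 − e_x) are primitive central idempotents of ℚ[G], and e_H = e_H e_x + e_H (1 − e_x). -/

import Mathlib

/-- A primitive central idempotent of a ring: a nonzero central idempotent that cannot be
written as the sum of two nonzero orthogonal central idempotents. -/
def IsPrimitiveCentralIdempotent {A : Type} [Ring A] (e : A) : Prop :=
  e ≠ 0 ∧ e ∈ Set.center A ∧ e * e = e ∧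
    ¬ ∃ e₁ e₂ : A, e₁ ≠ 0 ∧ e₂ ≠ 0 ∧ e₁ ∈ Set.center A ∧ e₂ ∈ Set.center A ∧
      e₁ * e₁ = e₁ ∧ e₂ * e₂ = e₂ ∧ e₁ * e₂ = 0 ∧ e₂ * e₁ = 0 ∧ e = e₁ + e₂

/-- The idempotent `e_y = (1/p)(1 + y + y² + ⋯ + y^{p−1})` in the rational group
algebra `ℚ[G]`. -/
noncomputable def eElt (p : ℕ) {G : Type} [Group G] (y : G) : MonoidAlgebra ℚ G :=
  (p : ℚ)⁻¹ • ∑ k ∈ Finset.range p, MonoidAlgebra.of ℚ G (y ^ k)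

/-- The idempotent `e_H = (1/|H|) Σ_{h ∈ H} h` in the rational group algebra `ℚ[G]`. -/
noncomputable def eSub {G : Type} [Group G] (H : Subgroup G) [Fintype ↥H] :
    MonoidAlgebra ℚ G :=
  (Fintype.card ↥H : ℚ)⁻¹ • ∑ h : ↥H, MonoidAlgebra.of ℚ G ↑h

theorem exists_index_fun (p : ℕ) (hp : p.Prime) (G : Type) [CommGroup G]
    (H : Subgroup G) (hidx : H.index = p) (x : G) (hx : x ∉ H) :
    ∃ m : G → ℕ, (∀ g, m g < p) ∧ (∀ g, g * (x ^ m g)⁻¹ ∈ H) ∧ m x = 1 ∧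
      (∀ g, m g = 0 ↔ g ∈ H) ∧
      (∀ g g', (↑(m (g * g')) : ZMod p) = ↑(m g) + ↑(m g')) := by
  haveI : Fact p.Prime := ⟨hp⟩
  set Q := G ⧸ H with hQ
  have hcard : Nat.card Q = p := by rw [← hidx]; rfl
  haveI : Finite Q := Nat.finite_of_card_ne_zero (by rw [hcard]; exact hp.pos.ne')
  set q : G →* Q := QuotientGroup.mk' H with hq
  have hqone : ∀ g : G, q g = 1 ↔ g ∈ H := fun g => QuotientGroup.eq_one_iff g
  have hqx : q x ≠ 1 := fun h => hx ((hqone x).1 h)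
  have hpow : ∀ y : Q, y ^ p = 1 := fun y => by
    rw [← hcard]; exact pow_card_eq_one'
  set f0 : ℤ →+ Additive Q := zmultiplesHom (Additive Q) (Additive.ofMul (q x)) with hf0
  have hf0p : f0 (p : ℤ) = 0 := by
    show ((p : ℤ) • Additive.ofMul (q x)) = 0
    rw [← ofMul_zpow, zpow_natCast]
    simp [hpow]
  set L : ZMod p →+ Additive Q := ZMod.lift p ⟨f0, hf0p⟩ with hL
  have hL1 : L 1 = Additive.ofMul (q x) := by
    have : ((1 : ℤ) : ZMod p) = 1 := by push_cast; ring
    rw [← this, ZMod.lift_coe]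
    show ((1:ℤ) • Additive.ofMul (q x)) = _
    simp
  have hLinj : Function.Injective L := by
    rw [injective_iff_map_eq_zero]
    intro a ha
    by_contra hane
    have h1 : L 1 = 0 := by
      have : (1 : ZMod p) = (a⁻¹.val : ℕ) • a := by
        rw [nsmul_eq_mul, ZMod.natCast_val, ZMod.cast_id, inv_mul_cancel₀ hane]
      rw [this, map_nsmul, ha, smul_zero]
    rw [hL1] at h1
    exact hqx (by simpa using h1)
  have hLbij : Function.Bijective L := by
    refine (Nat.bijective_iff_injective_and_card L).2 ⟨hLinj, ?_⟩
    · rw [Nat.card_zmod, Nat.card_congr (Additive.toMul (α := Q)), hcard]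
  set E : ZMod p ≃+ Additive Q := AddEquiv.ofBijective L hLbij with hE
  set k : G → ZMod p := fun g => E.symm (Additive.ofMul (q g)) with hk
  have hkadd : ∀ g g', k (g * g') = k g + k g' := by
    intro g g'
    show E.symm (Additive.ofMul (q (g * g'))) = _
    rw [map_mul]
    rw [show Additive.ofMul (q g * q g') = Additive.ofMul (q g) + Additive.ofMul (q g') from rfl,
      map_add]
  have hk0 : ∀ g, k g = 0 ↔ g ∈ H := by
    intro g
    rw [← hqone g]
    constructor
    · intro h
      have := congrArg E h
      rw [AddEquiv.apply_symm_apply, map_zero] at this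
      simpa using this
    · intro h
      show E.symm (Additive.ofMul (q g)) = 0
      rw [h]
      simpa using E.symm.map_zero
  have hkx : k x = 1 := by
    show E.symm (Additive.ofMul (q x)) = 1
    rw [← hL1]
    exact E.symm_apply_apply 1
  have hkpow : ∀ n : ℕ, k (x ^ n) = n := by
    intro n
    induction n with
    | zero => simp [(hk0 1).2 H.one_mem]
    | succ n ih => rw [pow_succ, hkadd, ih, hkx]; push_cast; ring
  refine ⟨fun g => (k g).val, fun g => ZMod.val_lt _, ?_, ?_, ?_, ?_⟩
  · intro g
    have hk1 : k 1 = 0 := (hk0 1).2 H.one_mem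
    have hkinv : ∀ y : G, k y⁻¹ = - k y := by
      intro y
      have h2 := hkadd y y⁻¹
      rw [mul_inv_cancel, hk1] at h2
      exact eq_neg_of_add_eq_zero_right h2.symm
    rw [← hk0]
    show k (g * (x ^ (k g).val)⁻¹) = 0
    rw [hkadd, hkinv, hkpow, ZMod.natCast_val, ZMod.cast_id, add_neg_cancel]
  · show (k x).val = 1
    haveI : Fact (1 < p) := ⟨hp.one_lt⟩
    rw [hkx, ZMod.val_one]
  · intro g
    show (k g).val = 0 ↔ _
    rw [ZMod.val_eq_zero, hk0]
  · intro g g'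
    show ((k (g * g')).val : ZMod p) = ((k g).val : ZMod p) + ((k g').val : ZMod p)
    rw [ZMod.natCast_val, ZMod.natCast_val, ZMod.natCast_val, ZMod.cast_id, ZMod.cast_id,
      ZMod.cast_id, hkadd]

theorem zeta_powers_li (p : ℕ) (hp : p.Prime)
    {K : Type} [Field K] [Algebra ℚ K]
    [IsCyclotomicExtension {p} ℚ K]
    {ζ : K} (hζ : IsPrimitiveRoot ζ p)
    (d : ℕ → ℚ) (hd : ∑ j ∈ Finset.range (p - 1), d j • ζ ^ j = 0) :
    ∀ j, j < p - 1 → d j = 0 := by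
  have hζ' : IsPrimitiveRoot ζ p := hζ
  haveI : NeZero p := ⟨hp.pos.ne'⟩
  set pb := hζ'.powerBasis ℚ with hpb
  haveI : NeZero ((⟨p, hp.pos⟩ : ℕ+) : ℕ) := ⟨hp.pos.ne'⟩
  have hdim : pb.dim = p - 1 := by
    rw [hpb, IsPrimitiveRoot.powerBasis_dim,
      ← hζ'.minpoly_eq_cyclotomic_of_irreducible (Polynomial.cyclotomic.irreducible_rat hp.pos),
      Polynomial.natDegree_cyclotomic]
    exact Nat.totient_prime hp
  have hli := pb.basis.linearIndependent
  rw [Fintype.linearIndependent_iff] at hli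
  have hgen : pb.gen = ζ := hζ'.powerBasis_gen ℚ
  have key := hli (fun i => d i) ?_
  · intro j hj
    have := key ⟨j, hdim ▸ hj⟩
    simpa using this
  · rw [← hd]
    rw [← Fin.sum_univ_eq_sum_range (fun j => d j • ζ ^ j) (p-1)]
    rw [← hdim]
    refine Finset.sum_congr rfl fun i _ => ?_
    rw [PowerBasis.coe_basis, hgen]

section Main
variable (G : Type) [CommGroup G] (H : Subgroup G) [Fintype ↥H]

theorem eSub_mul_of_mem {h : G} (hh : h ∈ H) :
    eSub H * MonoidAlgebra.of ℚ G h = eSub H := by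
  unfold eSub
  rw [smul_mul_assoc, Finset.sum_mul]
  congr 1
  have : ∀ h' : ↥H, MonoidAlgebra.of ℚ G ↑h' * MonoidAlgebra.of ℚ G h
      = MonoidAlgebra.of ℚ G ↑(h' * (⟨h, hh⟩ : ↥H)) := by
    intro h'
    rw [← map_mul]
    rfl
  rw [Finset.sum_congr rfl fun h' _ => this h']
  exact Fintype.sum_equiv (Equiv.mulRight (⟨h, hh⟩ : ↥H)) _ _ (fun h' => rfl)

theorem eSub_sq : eSub H * eSub H = eSub H := by
  have h0 : (Fintype.card ↥H : ℚ) ≠ 0 := Nat.cast_ne_zero.2 Fintype.card_ne_zero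
  nth_rewrite 2 [eSub]
  rw [mul_smul_comm, Finset.mul_sum,
    Finset.sum_congr rfl fun h _ => eSub_mul_of_mem G H h.2,
    Finset.sum_const, Finset.card_univ, ← Nat.cast_smul_eq_nsmul ℚ, smul_smul,
    inv_mul_cancel₀ h0, one_smul]

end Main

theorem stmt_17 (p : ℕ) (hp : p.Prime) (G : Type) [CommGroup G] [Fintype G]
    (hG : IsPGroup p G)
    (H : Subgroup G) [Fintype ↥H] (hidx : H.index = p)
    (x : G) (hx : x ∉ H) :
    IsPrimitiveCentralIdempotent (eSub H * eElt p x) ∧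
      IsPrimitiveCentralIdempotent (eSub H * (1 - eElt p x)) ∧
      eSub H = eSub H * eElt p x + eSub H * (1 - eElt p x) := by
  classical
  haveI : Fact p.Prime := ⟨hp⟩
  obtain ⟨m, hmlt, hmem, hmx, hm0, hmadd⟩ := exists_index_fun p hp G H hidx x hx
  have hp0 : (p : ℚ) ≠ 0 := Nat.cast_ne_zero.2 hp.pos.ne'
  have hcH : (Fintype.card ↥H : ℚ) ≠ 0 := Nat.cast_ne_zero.2 Fintype.card_ne_zero
  have hxp : x ^ p ∈ H := hidx ▸ Subgroup.pow_index_mem H x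
  set u : MonoidAlgebra ℚ G := eSub H * eElt p x with hu
  -- u * of x = u
  have hux : u * MonoidAlgebra.of ℚ G x = u := by
    rw [hu, eElt, mul_smul_comm, smul_mul_assoc]
    congr 1
    rw [Finset.mul_sum, Finset.sum_mul]
    have hterm : ∀ k : ℕ, (eSub H * MonoidAlgebra.of ℚ G (x ^ k)) * MonoidAlgebra.of ℚ G x
        = eSub H * MonoidAlgebra.of ℚ G (x ^ (k+1)) := by
      intro k; rw [mul_assoc, ← map_mul, ← pow_succ]
    simp only [hterm]
    have h1 := Finset.sum_range_succ' (fun k => eSub H * MonoidAlgebra.of ℚ G (x ^ k)) p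
    have h2 := Finset.sum_range_succ (fun k => eSub H * MonoidAlgebra.of ℚ G (x ^ k)) p
    have hF0 : eSub H * MonoidAlgebra.of ℚ G (x ^ 0) = eSub H * MonoidAlgebra.of ℚ G (x ^ p) := by
      rw [eSub_mul_of_mem G H hxp, pow_zero, map_one, mul_one]
    linear_combination h2 - h1 - hF0
  have huh : ∀ h : G, h ∈ H → u * MonoidAlgebra.of ℚ G h = u := by
    intro h hh
    rw [hu, mul_right_comm, eSub_mul_of_mem G H hh]
  have huxn : ∀ n : ℕ, u * MonoidAlgebra.of ℚ G (x ^ n) = u := by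
    intro n
    induction n with
    | zero => rw [pow_zero, map_one, mul_one]
    | succ n ih => rw [pow_succ, map_mul, ← mul_assoc, ih, hux]
  have hug : ∀ g : G, u * MonoidAlgebra.of ℚ G g = u := by
    intro g
    conv_lhs => rw [show g = (g * (x ^ m g)⁻¹) * x ^ m g from (inv_mul_cancel_right _ _).symm]
    rw [map_mul, ← mul_assoc, huh _ (hmem g), huxn]
  -- decomposition of elements
  have hdecomp : ∀ a : MonoidAlgebra ℚ G, a = ∑ g : G, a.coeff g • MonoidAlgebra.of ℚ G g := by
    intro a
    conv_lhs => rw [← MonoidAlgebra.sum_coeff_single a]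
    rw [Finsupp.sum_fintype _ _ (fun _ => MonoidAlgebra.single_zero _)]
    refine Finset.sum_congr rfl fun g _ => ?_
    rw [MonoidAlgebra.of_apply, MonoidAlgebra.smul_single', mul_one]
  -- augmentation
  set ε : MonoidAlgebra ℚ G →ₐ[ℚ] ℚ := MonoidAlgebra.lift ℚ ℚ G 1 with hε
  have hεof : ∀ g : G, ε (MonoidAlgebra.of ℚ G g) = 1 := fun g => MonoidAlgebra.lift_of 1 g
  have hεa : ∀ a : MonoidAlgebra ℚ G, ε a = ∑ g : G, a.coeff g := by
    intro a
    conv_lhs => rw [hdecomp a]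
    rw [map_sum]
    refine Finset.sum_congr rfl fun g _ => ?_
    rw [map_smul, hεof, smul_eq_mul, mul_one]
  have hmulof : ∀ v : MonoidAlgebra ℚ G, (∀ g : G, v * MonoidAlgebra.of ℚ G g = v) →
      ∀ a : MonoidAlgebra ℚ G, v * a = ε a • v := by
    intro v hv a
    conv_lhs => rw [hdecomp a]
    rw [Finset.mul_sum]
    have h1 : ∀ g : G, v * (a.coeff g • MonoidAlgebra.of ℚ G g) = a.coeff g • v := fun g => by
      rw [mul_smul_comm, hv]
    rw [Finset.sum_congr rfl fun g _ => h1 g, ← Finset.sum_smul, hεa]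
  have hεH : ε (eSub H) = 1 := by
    rw [eSub, map_smul, map_sum]
    simp only [hεof]
    rw [Finset.sum_const, Finset.card_univ, nsmul_eq_mul, mul_one, smul_eq_mul]
    exact inv_mul_cancel₀ hcH
  have hεx : ε (eElt p x) = 1 := by
    rw [eElt, map_smul, map_sum]
    simp only [hεof]
    rw [Finset.sum_const, Finset.card_range, nsmul_eq_mul, mul_one, smul_eq_mul]
    exact inv_mul_cancel₀ hp0
  have hεu : ε u = 1 := by rw [hu, map_mul, hεH, hεx, mul_one]
  have hu0 : u ≠ 0 := by
    intro h
    rw [h, map_zero] at hεu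
    exact one_ne_zero hεu.symm
  have huu : u * u = u := by rw [hmulof u hug u, hεu, one_smul]
  have hue : u * eElt p x = u := by rw [hmulof u hug, hεx, one_smul]
  -- the cyclotomic field and character
  haveI : NeZero p := ⟨hp.pos.ne'⟩
  haveI : NeZero (p : ℚ) := ⟨hp0⟩
  set K : Type := (Polynomial.cyclotomic p ℚ).SplittingField with hK
  haveI : IsCyclotomicExtension {p} ℚ K := CyclotomicField.isCyclotomicExtension p ℚ
  haveI : CharZero K := charZero_of_injective_algebraMap (algebraMap ℚ K).injective
  set ζ : K := IsCyclotomicExtension.zeta p ℚ K with hζdef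
  have hζ : IsPrimitiveRoot ζ p := IsCyclotomicExtension.zeta_spec p ℚ K
  have hζp : ζ ^ p = 1 := hζ.pow_eq_one
  set χ : G →* K :=
    { toFun := fun g => ζ ^ m g
      map_one' := by
        show ζ ^ m 1 = 1
        rw [(hm0 1).2 H.one_mem, pow_zero]
      map_mul' := by
        intro a b
        show ζ ^ m (a * b) = ζ ^ m a * ζ ^ m b
        rw [← pow_add, pow_eq_pow_mod _ hζp, pow_eq_pow_mod (m a + m b) hζp]
        congr 1
        have h3 := hmadd a b
        rw [← Nat.cast_add] at h3
        exact (ZMod.natCast_eq_natCast_iff _ _ _).1 h3 } with hχ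
  set ψ : MonoidAlgebra ℚ G →ₐ[ℚ] K := MonoidAlgebra.lift ℚ K G χ with hψ
  have hψof : ∀ g : G, ψ (MonoidAlgebra.of ℚ G g) = ζ ^ m g := fun g =>
    MonoidAlgebra.lift_of χ g
  have hψH : ψ (eSub H) = 1 := by
    rw [eSub, map_smul, map_sum]
    have h1 : ∀ h : ↥H, ψ (MonoidAlgebra.of ℚ G ↑h) = 1 := by
      intro h
      rw [hψof, (hm0 ↑h).2 h.2, pow_zero]
    simp only [h1]
    rw [Finset.sum_const, Finset.card_univ,
      nsmul_eq_mul, mul_one, Algebra.smul_def, map_inv₀, map_natCast]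
    exact inv_mul_cancel₀ (Nat.cast_ne_zero.2 Fintype.card_ne_zero)
  have hψxj : ∀ j : ℕ, ψ (MonoidAlgebra.of ℚ G (x ^ j)) = ζ ^ j := by
    intro j
    have : ψ (MonoidAlgebra.of ℚ G (x ^ j)) = χ (x ^ j) := MonoidAlgebra.lift_of χ _
    rw [this, map_pow]
    show (ζ ^ m x) ^ j = ζ ^ j
    rw [hmx, pow_one]
  have hψx : ψ (eElt p x) = 0 := by
    rw [eElt, map_smul, map_sum]
    simp only [hψxj]
    rw [hζ.geom_sum_eq_zero hp.one_lt, smul_zero]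
  have hψu : ψ u = 0 := by rw [hu, map_mul, hψH, hψx, mul_zero]
  set f : MonoidAlgebra ℚ G := eSub H - u with hf
  have hfeq : eSub H * (1 - eElt p x) = f := by rw [mul_one_sub, hf, hu]
  have hψf : ψ f = 1 := by rw [hf, map_sub, hψH, hψu, sub_zero]
  have hf0 : f ≠ 0 := by
    intro h
    rw [h, map_zero] at hψf
    exact one_ne_zero hψf.symm
  have hHu : eSub H * u = u := by rw [hu, ← mul_assoc, eSub_sq]
  have hff : f * f = f := by
    rw [hf, sub_mul, mul_sub, mul_sub, eSub_sq, hHu, mul_comm u (eSub H), hHu, huu]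
    ring
  have hfh : ∀ h : G, h ∈ H → f * MonoidAlgebra.of ℚ G h = f := by
    intro h hh
    rw [hf, sub_mul, eSub_mul_of_mem G H hh, huh h hh]
  have hfg : ∀ g : G, f * MonoidAlgebra.of ℚ G g = f * MonoidAlgebra.of ℚ G (x ^ m g) := by
    intro g
    conv_lhs => rw [show g = (g * (x ^ m g)⁻¹) * x ^ m g from (inv_mul_cancel_right _ _).symm]
    rw [map_mul, ← mul_assoc, hfh _ (hmem g)]
  have hfe : f * eElt p x = 0 := by rw [hf, sub_mul, ← hu, hue, sub_self]
  -- injectivity of ψ on f * A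
  have hinj : ∀ a : MonoidAlgebra ℚ G, ψ (f * a) = 0 → f * a = 0 := by
    intro a ha
    set C : ℕ → ℚ := fun j => ∑ g ∈ Finset.univ.filter (fun g => m g = j), a.coeff g with hC
    have hfa : f * a = ∑ j ∈ Finset.range p, C j • (f * MonoidAlgebra.of ℚ G (x ^ j)) := by
      have step1 : f * a = ∑ g : G, a.coeff g • (f * MonoidAlgebra.of ℚ G (x ^ m g)) := by
        conv_lhs => rw [hdecomp a]
        rw [Finset.mul_sum]
        exact Finset.sum_congr rfl fun g _ => by rw [mul_smul_comm, hfg]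
      rw [step1, ← Finset.sum_fiberwise_of_maps_to (fun g _ => Finset.mem_range.2 (hmlt g))
          (fun g => a.coeff g • (f * MonoidAlgebra.of ℚ G (x ^ m g)))]
      refine Finset.sum_congr rfl fun j hj => ?_
      rw [show C j = ∑ g ∈ Finset.univ.filter (fun g => m g = j), a.coeff g from rfl,
        Finset.sum_smul]
      refine Finset.sum_congr rfl fun g hg => ?_
      rw [(Finset.mem_filter.1 hg).2]
    have hψa : ∑ j ∈ Finset.range p, C j • ζ ^ j = 0 := by
      rw [hfa, map_sum] at ha
      rw [← ha]
      refine Finset.sum_congr rfl fun j _ => ?_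
      rw [map_smul, map_mul, hψf, hψxj, one_mul]
    have hgeom : ∑ j ∈ Finset.range p, ζ ^ j = 0 := hζ.geom_sum_eq_zero hp.one_lt
    have hall : ∀ j, j < p → C j = C (p - 1) := by
      have hd : ∑ j ∈ Finset.range (p - 1), (C j - C (p - 1)) • ζ ^ j = 0 := by
        have e1 : ∑ j ∈ Finset.range p, (C j - C (p - 1)) • ζ ^ j = 0 := by
          simp only [sub_smul]
          rw [Finset.sum_sub_distrib, hψa, ← Finset.smul_sum, hgeom, smul_zero, sub_zero]
        have hps : p = (p - 1) + 1 := (Nat.succ_pred_eq_of_pos hp.pos).symm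
        have e2 : ∑ j ∈ Finset.range ((p - 1) + 1), (C j - C (p - 1)) • ζ ^ j = 0 := by
          rw [← hps]; exact e1
        rw [Finset.sum_range_succ, sub_self, zero_smul, add_zero] at e2
        exact e2
      have hli := zeta_powers_li p hp hζ (fun j => C j - C (p - 1)) hd
      intro j hj
      by_cases hj' : j = p - 1
      · rw [hj']
      · have hjlt : j < p - 1 := by omega
        have h6 : C j - C (p - 1) = 0 := hli j hjlt
        linarith
    have hstep : ∑ j ∈ Finset.range p, C j • (f * MonoidAlgebra.of ℚ G (x ^ j))
        = C (p - 1) • ∑ j ∈ Finset.range p, f * MonoidAlgebra.of ℚ G (x ^ j) := by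
      rw [Finset.smul_sum]
      refine Finset.sum_congr rfl fun j hj => ?_
      rw [hall j (Finset.mem_range.1 hj)]
    have hsum : ∑ j ∈ Finset.range p, MonoidAlgebra.of ℚ G (x ^ j) = (p : ℚ) • eElt p x := by
      rw [eElt, smul_smul, mul_inv_cancel₀ hp0, one_smul]
    rw [hfa, hstep, ← Finset.mul_sum, hsum, mul_smul_comm, hfe, smul_zero, smul_zero]
  -- centrality
  have hcen : ∀ a : MonoidAlgebra ℚ G, a ∈ Set.center (MonoidAlgebra ℚ G) := by
    intro a
    rw [Set.center_eq_univ]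
    trivial
  rw [hfeq]
  refine ⟨⟨hu0, hcen u, huu, ?_⟩, ⟨hf0, hcen f, hff, ?_⟩, ?_⟩
  · rintro ⟨e₁, e₂, h1, h2, -, -, hi1, hi2, h12, h21, hsum⟩
    have he1 : e₁ = ε e₁ • u := by
      have h3 : e₁ * u = e₁ := by rw [hsum, mul_add, hi1, h12, add_zero]
      calc e₁ = u * e₁ := by rw [mul_comm, h3]
        _ = ε e₁ • u := hmulof u hug e₁
    have he2 : e₂ = ε e₂ • u := by
      have h3 : e₂ * u = e₂ := by rw [hsum, mul_add, h21, hi2, zero_add]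
      calc e₂ = u * e₂ := by rw [mul_comm, h3]
        _ = ε e₂ • u := hmulof u hug e₂
    have hεe : ε e₁ * ε e₂ = 0 := by rw [← map_mul, h12, map_zero]
    rcases mul_eq_zero.1 hεe with h | h
    · exact h1 (by rw [he1, h, zero_smul])
    · exact h2 (by rw [he2, h, zero_smul])
  · rintro ⟨e₁, e₂, h1, h2, -, -, hi1, hi2, h12, h21, hsum⟩
    have hfe1 : f * e₁ = e₁ := by rw [hsum, add_mul, hi1, h21, add_zero]
    have hfe2 : f * e₂ = e₂ := by rw [hsum, add_mul, h12, hi2, zero_add]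
    have hcase : ψ e₁ = 0 ∨ ψ e₁ = 1 := by
      have h3 : ψ e₁ * (ψ e₁ - 1) = 0 := by
        rw [mul_sub, ← map_mul, hi1, mul_one, sub_self]
      rcases mul_eq_zero.1 h3 with h | h
      · exact Or.inl h
      · exact Or.inr (sub_eq_zero.1 h)
    rcases hcase with h | h
    · refine h1 ?_
      have h4 := hinj e₁ (by rw [hfe1]; exact h)
      rwa [hfe1] at h4
    · have hψ2 : ψ e₂ = 0 := by
        have h5 : ψ e₁ + ψ e₂ = ψ f := by rw [← map_add, hsum]
        rw [h, hψf] at h5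
        linear_combination h5
      refine h2 ?_
      have h4 := hinj e₂ (by rw [hfe2]; exact hψ2)
      rwa [hfe2] at h4
  · rw [hf]
    ring
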